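/- Let R be a finite commutative ring and S ⊆ U(R) with S⁻¹ ⊆ S. If the nonorientable genus of Γ(R, S) equals 1, then |U(R)| ≤ 6 and |J(R)| ≤ 3. -/

import Mathlib

namespace CrosscapDef

open SimpleGraph

variable {V : Type*}

/-- An embedding scheme (rotation system together with an edge signature) for a simple
graph `G`: `rot` cyclically permutes the darts around each vertex (a single cycle at every
vertex), and `sgn d = true` means the edge of `d` is orientation-reversing. -/
structure Scheme {V : Type*} (G : SimpleGraph V) where
  rot : Equiv.Perm G.Dart
  rot_fst : ∀ d : G.Dart, (rot d).toProd.1 = d.toProd.1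
  rot_single : ∀ d e : G.Dart, d.toProd.1 = e.toProd.1 → rot.SameCycle d e
  sgn : G.Dart → Bool
  sgn_symm : ∀ d : G.Dart, sgn d.symm = sgn d

/-- Crossing an edge: reverse the dart and flip the local orientation according to the
signature. -/
def Scheme.flip {G : SimpleGraph V} (σ : Scheme G) : Equiv.Perm (G.Dart × Bool) :=
  Function.Involutive.toPerm (fun p => (p.1.symm, xor p.2 (σ.sgn p.1)))
    (by
      rintro ⟨d, s⟩
      simp [SimpleGraph.Dart.symm_symm, σ.sgn_symm, Bool.xor_assoc])

/-- Turning around a vertex: apply the rotation or its inverse, depending on the current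
local orientation. -/
def Scheme.step {G : SimpleGraph V} (σ : Scheme G) : Equiv.Perm (G.Dart × Bool) where
  toFun p := (cond p.2 (σ.rot p.1) (σ.rot.symm p.1), p.2)
  invFun p := (cond p.2 (σ.rot.symm p.1) (σ.rot p.1), p.2)
  left_inv := by rintro ⟨d, s⟩; cases s <;> simp
  right_inv := by rintro ⟨d, s⟩; cases s <;> simp

/-- The face-tracing permutation of an embedding scheme. -/
def Scheme.facePerm {G : SimpleGraph V} (σ : Scheme G) : Equiv.Perm (G.Dart × Bool) :=
  σ.step * σ.flip

/-- The number of cycles (orbits) of a permutation. -/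
noncomputable def cycleCount {α : Type*} (f : Equiv.Perm α) : ℕ :=
  Nat.card (Quotient (Setoid.mk f.SameCycle
    ⟨fun _ => Equiv.Perm.SameCycle.rfl, Equiv.Perm.SameCycle.symm, Equiv.Perm.SameCycle.trans⟩))

/-- The number of faces of an embedding scheme: each face is traced twice by `facePerm`. -/
noncomputable def Scheme.faceCount {G : SimpleGraph V} (σ : Scheme G) : ℕ :=
  cycleCount σ.facePerm / 2

/-- The Euler genus `2 - v + e - f` of (the surface of) an embedding scheme of a connected
graph. -/
noncomputable def Scheme.eulerGenus {G : SimpleGraph V} (σ : Scheme G) : ℤ :=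
  2 - (Nat.card V : ℤ) + ((Nat.card G.Dart / 2 : ℕ) : ℤ) - (σ.faceCount : ℤ)

/-- An embedding scheme is orientable iff its signature is switching-equivalent to the
all-positive signature. -/
def Scheme.Orientable {G : SimpleGraph V} (σ : Scheme G) : Prop :=
  ∃ f : V → Bool, ∀ d : G.Dart, σ.sgn d = xor (f d.toProd.1) (f d.toProd.2)

/-- `G` embeds in the sphere with `k` crosscaps: some connected supergraph of `G` (on the same
vertex set) has a cellular embedding scheme whose surface is the sphere with `k` crosscaps. -/
def EmbedsWithCrosscaps (G : SimpleGraph V) (k : ℕ) : Prop :=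
  ∃ H : SimpleGraph V, G ≤ H ∧ H.Preconnected ∧
    ∃ σ : Scheme H, σ.eulerGenus = (k : ℤ) ∧ (k = 0 ∨ ¬ σ.Orientable)

/-- `G` embeds in the sphere with `g` handles (an orientable surface of genus `g`). -/
def EmbedsWithHandles (G : SimpleGraph V) (g : ℕ) : Prop :=
  ∃ H : SimpleGraph V, G ≤ H ∧ H.Preconnected ∧
    ∃ σ : Scheme H, σ.eulerGenus = (2 * g : ℤ) ∧ σ.Orientable

/-- The nonorientable genus (crosscap number) of a finite graph: the least `k` such that `G`
embeds in the sphere with `k` crosscaps. -/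
noncomputable def crosscap (G : SimpleGraph V) : ℕ :=
  sInf {k : ℕ | EmbedsWithCrosscaps G k}

/-- The (orientable) genus of a finite graph. -/
noncomputable def genus (G : SimpleGraph V) : ℕ :=
  sInf {g : ℕ | EmbedsWithHandles G g}

/-- The nonorientable genus of an arbitrary (possibly infinite) graph: the supremum of the
nonorientable genera of its finite (induced) subgraphs. -/
noncomputable def crosscapE (G : SimpleGraph V) : ℕ∞ :=
  ⨆ s : Finset V, (crosscap (G.induce (s : Set V)) : ℕ∞)

end CrosscapDef

namespace CrosscapDef
/-- The generalized unit and unitary Cayley graph `Γ(R, G, S)`: vertices are the elements of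
`R`, and distinct `x`, `y` are adjacent iff `x + s*y` is a unit belonging to `G` for some
`s ∈ S`. -/
def gammaGraph (R : Type*) [CommRing R] (G : Subgroup Rˣ) (S : Set Rˣ)
    (hSG : S ⊆ (G : Set Rˣ)) (hS : S⁻¹ ⊆ S) : SimpleGraph R where
  Adj x y := x ≠ y ∧ ∃ s ∈ S, ∃ u ∈ G, (u : R) = x + (s : Rˣ) * y
  symm := ⟨by
    rintro x y ⟨hxy, s, hs, u, hu, h⟩
    refine ⟨hxy.symm, s⁻¹, hS (by simpa using hs), s⁻¹ * u,
      mul_mem (inv_mem (hSG hs)) hu, ?_⟩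
    have h1 : ((s⁻¹ : Rˣ) : R) * (s : R) = 1 := Units.inv_mul s
    calc ((s⁻¹ * u : Rˣ) : R) = ((s⁻¹ : Rˣ) : R) * ((u : Rˣ) : R) := Units.val_mul _ _
      _ = ((s⁻¹ : Rˣ) : R) * (x + (s : Rˣ) * y) := by rw [h]
      _ = y + ((s⁻¹ : Rˣ) : R) * x := by rw [mul_add, ← mul_assoc, h1]; ring⟩
  loopless := ⟨fun x h => h.1 rfl⟩

/-- The graph `Γ(R, S) = Γ(R, U(R), S)`. -/
def unitGammaGraph (R : Type*) [CommRing R] (S : Set Rˣ) (hS : S⁻¹ ⊆ S) : SimpleGraph R :=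
  gammaGraph R ⊤ S (fun x _ => by simp) hS

/-- The co-maximal graph of `R`: distinct `x`, `y` are adjacent iff `Rx + Ry = R`. -/
def comaximalGraph (R : Type*) [CommRing R] : SimpleGraph R where
  Adj x y := x ≠ y ∧ Ideal.span {x} ⊔ Ideal.span {y} = ⊤
  symm := ⟨by rintro x y ⟨h1, h2⟩; exact ⟨h1.symm, by rwa [sup_comm]⟩⟩
  loopless := ⟨fun x h => h.1 rfl⟩

end CrosscapDef


namespace CrosscapDef
set_option linter.unusedSectionVars false
section Counting

variable {α : Type*} [Fintype α]

lemma sameCycle_const {α β : Type*} (f : Equiv.Perm α) (g : α → β)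
    (hf : ∀ x, g (f x) = g x) {x y : α} (h : f.SameCycle x y) : g x = g y := by
  obtain ⟨k, rfl⟩ := h
  induction k using Int.induction_on with
  | zero => simp
  | succ n ih => rw [add_comm, zpow_add, zpow_one, Equiv.Perm.mul_apply, hf]; exact ih
  | pred n ih =>
    have : g (f ((f ^ (-(n:ℤ) - 1)) x)) = g ((f ^ (-(n:ℤ) - 1)) x) := hf _
    rw [← Equiv.Perm.mul_apply, ← zpow_one_add f (-(n:ℤ) - 1)] at this
    have h1 : (1 : ℤ) + (-(n:ℤ) - 1) = -(n:ℤ) := by ring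
    rw [h1] at this
    rw [this] at ih
    exact ih

private def cycSetoid {α : Type*} (f : Equiv.Perm α) : Setoid α :=
  Setoid.mk f.SameCycle
    ⟨fun _ => Equiv.Perm.SameCycle.rfl, Equiv.Perm.SameCycle.symm, Equiv.Perm.SameCycle.trans⟩

omit [Fintype α] in
lemma cycleCount_eq_card (f : Equiv.Perm α) :
    cycleCount f = Nat.card (Quotient (cycSetoid f)) := rfl

private lemma four_le_card {T : Type*} [Fintype T] (a b c d : T) (hab : a ≠ b) (hac : a ≠ c)
    (had : a ≠ d) (hbc : b ≠ c) (hbd : b ≠ d) (hcd : c ≠ d) : 4 ≤ Fintype.card T := by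
  classical
  have hs : ({a, b, c, d} : Finset T).card = 4 := by
    rw [Finset.card_insert_of_notMem (by simp [hab, hac, had]),
      Finset.card_insert_of_notMem (by simp [hbc, hbd]),
      Finset.card_insert_of_notMem (by simp [hcd]), Finset.card_singleton]
  calc 4 = ({a, b, c, d} : Finset T).card := hs.symm
    _ ≤ Fintype.card T := Finset.card_le_card (Finset.subset_univ _) |>.trans_eq
        (Finset.card_univ)

lemma card_eq_sum_fibers (f : Equiv.Perm α) [Fintype (Quotient (cycSetoid f))]
    [∀ q : Quotient (cycSetoid f), Fintype {x : α // Quotient.mk (cycSetoid f) x = q}] :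
    Fintype.card α
      = ∑ q : Quotient (cycSetoid f), Fintype.card {x : α // Quotient.mk (cycSetoid f) x = q} := by
  rw [← Fintype.card_sigma]
  exact (Fintype.card_congr (Equiv.sigmaFiberEquiv (Quotient.mk (cycSetoid f)))).symm

omit [Fintype α] in
lemma mk_apply_eq (f : Equiv.Perm α) (x : α) :
    Quotient.mk (cycSetoid f) (f x) = Quotient.mk (cycSetoid f) x :=
  Quotient.sound (⟨-1, by simp⟩ : f.SameCycle (f x) x)

lemma three_mul_cycleCount_le (P : Equiv.Perm α) (h1 : ∀ x, P x ≠ x)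
    (h2 : ∀ x, P (P x) ≠ x) : 3 * cycleCount P ≤ Fintype.card α := by
  classical
  haveI : Fintype (Quotient (cycSetoid P)) := Fintype.ofFinite _
  rw [cycleCount_eq_card, Nat.card_eq_fintype_card, card_eq_sum_fibers P]
  have hfib : ∀ q : Quotient (cycSetoid P),
      3 ≤ Fintype.card {x : α // Quotient.mk (cycSetoid P) x = q} := by
    intro q
    obtain ⟨x, rfl⟩ := Quotient.exists_rep q
    have h3 : 2 < Fintype.card {y : α // Quotient.mk (cycSetoid P) y = Quotient.mk (cycSetoid P) x} := by
      rw [Fintype.two_lt_card_iff]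
      refine ⟨⟨x, rfl⟩, ⟨P x, mk_apply_eq P x⟩,
        ⟨P (P x), by rw [mk_apply_eq, mk_apply_eq]⟩, ?_, ?_, ?_⟩ <;>
        simp only [ne_eq, Subtype.mk.injEq]
      · exact fun h => h1 x h.symm
      · exact fun h => h2 x h.symm
      · exact fun h => h1 (P x) h.symm
    exact h3
  calc 3 * Fintype.card (Quotient (cycSetoid P))
      = ∑ _q : Quotient (cycSetoid P), 3 := by simp [Finset.sum_const, mul_comm]
    _ ≤ ∑ q, Fintype.card {x : α // Quotient.mk (cycSetoid P) x = q} :=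
        Finset.sum_le_sum fun q _ => hfib q

lemma four_mul_cycleCount_le (P : Equiv.Perm α) (E : Set α) (h1 : ∀ x, P x ≠ x)
    (h2 : ∀ x, P (P x) ≠ x)
    (h3 : ∀ x, P (P (P x)) = x → x ∈ E ∨ P x ∈ E ∨ P (P x) ∈ E) :
    4 * cycleCount P ≤ Fintype.card α + Nat.card E := by
  classical
  haveI : Fintype (Quotient (cycSetoid P)) := Fintype.ofFinite _
  haveI : Fintype E := Fintype.ofFinite _
  set Q := Quotient (cycSetoid P) with hQ
  set meets : Q → Prop := fun q => ∃ x ∈ E, Quotient.mk (cycSetoid P) x = q with hmeets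
  set A : Finset Q := Finset.univ.filter meets with hA
  set B : Finset Q := Finset.univ.filter (fun q => ¬ meets q) with hB
  -- m ≤ card E
  have hm : A.card ≤ Nat.card E := by
    rw [Nat.card_eq_fintype_card]
    have : Fintype.card {q : Q // meets q} = A.card := Fintype.card_subtype _
    rw [← this]
    refine Fintype.card_le_of_injective
      (fun q => ⟨(q.2.choose), q.2.choose_spec.1⟩) ?_
    intro q q' h
    have h1' : Quotient.mk (cycSetoid P) (q.2.choose) = q.1 := q.2.choose_spec.2
    have h2' : Quotient.mk (cycSetoid P) (q'.2.choose) = q'.1 := q'.2.choose_spec.2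
    apply Subtype.ext
    rw [← h1', ← h2']
    exact congrArg _ (congrArg Subtype.val h)
  -- fiber bounds
  have hfib3 : ∀ q : Q, 3 ≤ Fintype.card {x : α // Quotient.mk (cycSetoid P) x = q} := by
    intro q
    obtain ⟨x, rfl⟩ := Quotient.exists_rep q
    have h3' : 2 < Fintype.card {y : α // Quotient.mk (cycSetoid P) y = Quotient.mk (cycSetoid P) x} := by
      rw [Fintype.two_lt_card_iff]
      refine ⟨⟨x, rfl⟩, ⟨P x, mk_apply_eq P x⟩,
        ⟨P (P x), by rw [mk_apply_eq, mk_apply_eq]⟩, ?_, ?_, ?_⟩ <;>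
        simp only [ne_eq, Subtype.mk.injEq]
      · exact fun h => h1 x h.symm
      · exact fun h => h2 x h.symm
      · exact fun h => h1 (P x) h.symm
    exact h3'
  have hfib4 : ∀ q : Q, ¬ meets q →
      4 ≤ Fintype.card {x : α // Quotient.mk (cycSetoid P) x = q} := by
    intro q hq
    obtain ⟨x, rfl⟩ := Quotient.exists_rep q
    have hx3 : P (P (P x)) ≠ x := by
      intro hfix
      rcases h3 x hfix with hE | hE | hE
      · exact hq ⟨x, hE, rfl⟩
      · exact hq ⟨P x, hE, mk_apply_eq P x⟩
      · exact hq ⟨P (P x), hE, by rw [mk_apply_eq, mk_apply_eq]⟩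
    refine four_le_card (⟨x, rfl⟩ : {y : α // Quotient.mk (cycSetoid P) y = Quotient.mk (cycSetoid P) x})
      ⟨P x, mk_apply_eq P x⟩ ⟨P (P x), by rw [mk_apply_eq, mk_apply_eq]⟩
      ⟨P (P (P x)), by rw [mk_apply_eq, mk_apply_eq, mk_apply_eq]⟩ ?_ ?_ ?_ ?_ ?_ ?_ <;>
      simp only [ne_eq, Subtype.mk.injEq]
    · exact fun h => h1 x h.symm
    · exact fun h => h2 x h.symm
    · exact fun h => hx3 h.symm
    · exact fun h => h1 (P x) h.symm
    · exact fun h => h2 (P x) h.symm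
    · exact fun h => h1 (P (P x)) h.symm
  have hcard : A.card + B.card = Fintype.card Q := by
    rw [hA, hB]
    rw [Finset.card_filter_add_card_filter_not]
    · exact Finset.card_univ
  have hsum : Fintype.card α
      = ∑ q : Q, Fintype.card {x : α // Quotient.mk (cycSetoid P) x = q} :=
    card_eq_sum_fibers P
  have hsplit : ∑ q : Q, Fintype.card {x : α // Quotient.mk (cycSetoid P) x = q}
      = ∑ q ∈ A, Fintype.card {x : α // Quotient.mk (cycSetoid P) x = q}
        + ∑ q ∈ B, Fintype.card {x : α // Quotient.mk (cycSetoid P) x = q} :=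
    (Finset.sum_filter_add_sum_filter_not Finset.univ meets _).symm
  have hAsum : 3 * A.card ≤ ∑ q ∈ A, Fintype.card {x : α // Quotient.mk (cycSetoid P) x = q} := by
    calc 3 * A.card = ∑ _q ∈ A, 3 := by simp [mul_comm]
      _ ≤ _ := Finset.sum_le_sum fun q _ => hfib3 q
  have hBsum : 4 * B.card ≤ ∑ q ∈ B, Fintype.card {x : α // Quotient.mk (cycSetoid P) x = q} := by
    calc 4 * B.card = ∑ _q ∈ B, 4 := by simp [mul_comm]
      _ ≤ _ := Finset.sum_le_sum fun q _ => hfib4 q (by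
        have := Finset.mem_filter.1 (by assumption : q ∈ B)
        exact this.2)
  have hcc : cycleCount P = Fintype.card Q := by
    rw [cycleCount_eq_card, Nat.card_eq_fintype_card]
  have key : 4 * cycleCount P ≤ Fintype.card α + A.card := by
    rw [hcc, ← hcard]
    calc 4 * (A.card + B.card) = (3 * A.card + 4 * B.card) + A.card := by ring
      _ ≤ (∑ q ∈ A, Fintype.card {x : α // Quotient.mk (cycSetoid P) x = q}
            + ∑ q ∈ B, Fintype.card {x : α // Quotient.mk (cycSetoid P) x = q}) + A.card := by
          exact Nat.add_le_add_right (Nat.add_le_add hAsum hBsum) _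
      _ = Fintype.card α + A.card := by rw [← hsplit, ← hsum]
  exact key.trans (Nat.add_le_add_left hm _)

end Counting
end CrosscapDef

namespace CrosscapDef

open SimpleGraph

section SchemeLemmas

variable {V : Type*} {H : SimpleGraph V}

lemma Scheme.facePerm_apply (σ : Scheme H) (p : H.Dart × Bool) :
    σ.facePerm p = (cond (xor p.2 (σ.sgn p.1)) (σ.rot p.1.symm) (σ.rot.symm p.1.symm),
      xor p.2 (σ.sgn p.1)) := rfl

lemma Scheme.rot_symm_fst (σ : Scheme H) (d : H.Dart) :
    (σ.rot.symm d).toProd.1 = d.toProd.1 := by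
  conv_rhs => rw [← σ.rot.apply_symm_apply d]
  rw [σ.rot_fst]

lemma Scheme.facePerm_fst (σ : Scheme H) (p : H.Dart × Bool) :
    (σ.facePerm p).1.toProd.1 = p.1.toProd.2 := by
  rw [Scheme.facePerm_apply]
  cases xor p.2 (σ.sgn p.1) <;>
    simp [σ.rot_fst, σ.rot_symm_fst, SimpleGraph.Dart.symm_toProd]

lemma Scheme.facePerm_ne (σ : Scheme H) (p : H.Dart × Bool) : σ.facePerm p ≠ p := by
  intro h
  have h1 := σ.facePerm_fst p
  rw [h] at h1
  exact p.1.adj.ne h1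

lemma Scheme.rot_eq_self (σ : Scheme H)
    (hdeg : ∀ v : V, ∃ y z : V, y ≠ z ∧ H.Adj v y ∧ H.Adj v z)
    (d : H.Dart) : σ.rot d ≠ d := by
  intro hfix
  obtain ⟨y, z, hyz, hy, hz⟩ := hdeg d.toProd.1
  have key : ∀ e : H.Dart, e.toProd.1 = d.toProd.1 → e = d := by
    intro e he
    obtain ⟨k, hk⟩ := σ.rot_single d e he.symm
    have : (σ.rot ^ k) d = d := Function.IsFixedPt.perm_zpow hfix k
    rw [this] at hk
    exact hk.symm
  have h1 : (⟨(d.toProd.1, y), hy⟩ : H.Dart) = d := key _ rfl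
  have h2 : (⟨(d.toProd.1, z), hz⟩ : H.Dart) = d := key _ rfl
  have h3 : (⟨(d.toProd.1, y), hy⟩ : H.Dart) = ⟨(d.toProd.1, z), hz⟩ := h1.trans h2.symm
  exact hyz (congrArg (fun e : H.Dart => e.toProd.2) h3)

lemma Scheme.facePerm_sq_ne (σ : Scheme H)
    (hdeg : ∀ v : V, ∃ y z : V, y ≠ z ∧ H.Adj v y ∧ H.Adj v z)
    (p : H.Dart × Bool) : σ.facePerm (σ.facePerm p) ≠ p := by
  intro hfix
  set q := σ.facePerm p with hq
  -- the dart of q is the reversal of the dart of p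
  have hq1 : q.1.toProd.1 = p.1.toProd.2 := σ.facePerm_fst p
  have hq2 : q.1.toProd.2 = p.1.toProd.1 := by
    have := σ.facePerm_fst q
    rw [hfix] at this
    exact this.symm
  have hqd : q.1 = p.1.symm := by
    apply SimpleGraph.Dart.toProd_injective
    rw [SimpleGraph.Dart.symm_toProd]
    exact Prod.ext hq1 hq2
  -- hence rot fixes p.1.symm
  have hrot : σ.rot p.1.symm = p.1.symm := by
    have happ := σ.facePerm_apply p
    rw [← hq] at happ
    have hfst : p.1.symm
        = cond (xor p.2 (σ.sgn p.1)) (σ.rot p.1.symm) (σ.rot.symm p.1.symm) := by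
      have h' := congrArg Prod.fst happ
      rw [hqd] at h'
      exact h'
    rcases Bool.eq_false_or_eq_true (xor p.2 (σ.sgn p.1)) with hb | hb <;>
      rw [hb] at hfst <;> simp only [cond_true, cond_false] at hfst
    · exact hfst.symm
    · exact σ.rot.apply_eq_iff_eq_symm_apply.mpr hfst
  exact σ.rot_eq_self hdeg p.1.symm hrot

lemma Scheme.facePerm_triangle (σ : Scheme H) {G : SimpleGraph V} (c : V → Bool)
    (hc : ∀ x y : V, G.Adj x y → c y = !c x) (p : H.Dart × Bool)
    (hfix : σ.facePerm (σ.facePerm (σ.facePerm p)) = p)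
    (h0 : G.Adj p.1.toProd.1 p.1.toProd.2)
    (h1 : G.Adj (σ.facePerm p).1.toProd.1 (σ.facePerm p).1.toProd.2)
    (h2 : G.Adj (σ.facePerm (σ.facePerm p)).1.toProd.1
      (σ.facePerm (σ.facePerm p)).1.toProd.2) : False := by
  set p1 := σ.facePerm p with hp1
  set p2 := σ.facePerm p1 with hp2
  have e1 : p1.1.toProd.1 = p.1.toProd.2 := σ.facePerm_fst p
  have e2 : p2.1.toProd.1 = p1.1.toProd.2 := σ.facePerm_fst p1
  have e3 : p.1.toProd.1 = p2.1.toProd.2 := by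
    have h := σ.facePerm_fst p2
    rw [hfix] at h
    exact h
  have c0 := hc _ _ h0
  have c1 := hc _ _ h1
  have c2 := hc _ _ h2
  rw [e1] at c1
  rw [e2] at c2
  rw [← e3] at c2
  rw [c1, c0] at c2
  simp at c2

end SchemeLemmas
end CrosscapDef

namespace CrosscapDef

open SimpleGraph

section Bounds

variable {V : Type*} [Fintype V]

lemma dart_finite (H : SimpleGraph V) : Finite H.Dart :=
  Finite.of_injective (fun d => d.toProd) SimpleGraph.Dart.toProd_injective

lemma genus_bound_general {H : SimpleGraph V} (σ : Scheme H)
    (hdeg : ∀ v : V, ∃ y z : V, y ≠ z ∧ H.Adj v y ∧ H.Adj v z)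
    (hg : σ.eulerGenus = 1) :
    (Nat.card H.Dart : ℤ) ≤ 6 * Nat.card V - 3 := by
  classical
  haveI : Finite H.Dart := dart_finite H
  haveI : Fintype H.Dart := Fintype.ofFinite _
  set D := Nat.card H.Dart with hD
  set n := Nat.card V with hn
  set cc := cycleCount σ.facePerm with hcc
  have hg' : 2 - (n:ℤ) + ((D / 2 : ℕ) : ℤ) - ((cc / 2 : ℕ) : ℤ) = 1 := hg
  have h3cc : 3 * cc ≤ 2 * D := by
    have h := three_mul_cycleCount_le σ.facePerm σ.facePerm_ne (σ.facePerm_sq_ne hdeg)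
    rw [Fintype.card_prod, Fintype.card_bool, ← Nat.card_eq_fintype_card, ← hD, ← hcc] at h
    omega
  omega

lemma genus_bound_bipartite {G H : SimpleGraph V} (hGH : G ≤ H) (σ : Scheme H)
    (hdeg : ∀ v : V, ∃ y z : V, y ≠ z ∧ H.Adj v y ∧ H.Adj v z)
    (c : V → Bool) (hc : ∀ x y : V, G.Adj x y → c y = !c x)
    (hg : σ.eulerGenus = 1) :
    (Nat.card {d : H.Dart // G.Adj d.toProd.1 d.toProd.2} : ℤ) ≤ 4 * Nat.card V - 2 := by
  classical
  haveI : Finite H.Dart := dart_finite H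
  haveI : Fintype H.Dart := Fintype.ofFinite _
  set D := Nat.card H.Dart with hD
  set n := Nat.card V with hn
  set cc := cycleCount σ.facePerm with hcc
  set DG := Nat.card {d : H.Dart // G.Adj d.toProd.1 d.toProd.2} with hDG
  have hg' : 2 - (n:ℤ) + ((D / 2 : ℕ) : ℤ) - ((cc / 2 : ℕ) : ℤ) = 1 := hg
  set E : Set (H.Dart × Bool) := {p | ¬ G.Adj p.1.toProd.1 p.1.toProd.2} with hE
  have hcardE : Nat.card E = 2 * (D - DG) := by
    have e1 : E ≃ {d : H.Dart // ¬ G.Adj d.toProd.1 d.toProd.2} × Bool :=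
      Equiv.prodSubtypeFstEquivSubtypeProd
        (p := fun d : H.Dart => ¬ G.Adj d.toProd.1 d.toProd.2) (β := Bool)
    rw [Nat.card_congr e1, Nat.card_eq_fintype_card, Fintype.card_prod, Fintype.card_bool,
      Fintype.card_subtype_compl, mul_comm]
    congr 1
    rw [hD, hDG, Nat.card_eq_fintype_card, Nat.card_eq_fintype_card]
  have hDGD : DG ≤ D := by
    rw [hDG, hD]
    exact Nat.card_le_card_of_injective (fun d => d.1) Subtype.val_injective
  have h4cc : 4 * cc ≤ 2 * D + Nat.card E := by
    have h := four_mul_cycleCount_le σ.facePerm E σ.facePerm_ne (σ.facePerm_sq_ne hdeg) ?_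
    · rw [Fintype.card_prod, Fintype.card_bool, ← Nat.card_eq_fintype_card, ← hD, ← hcc] at h
      omega
    · intro p hfix
      by_contra hcon
      push_neg at hcon
      obtain ⟨he0, he1, he2⟩ := hcon
      simp only [hE, Set.mem_setOf_eq, not_not] at he0 he1 he2
      exact σ.facePerm_triangle c hc p hfix he0 he1 he2
  rw [hcardE] at h4cc
  omega

end Bounds
end CrosscapDef

namespace CrosscapDef

open SimpleGraph

section Star

variable {V : Type*} [DecidableEq V] (c : V)

private def starG : SimpleGraph V where
  Adj x y := x ≠ y ∧ (x = c ∨ y = c)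
  symm := ⟨by rintro x y ⟨h1, h2⟩; exact ⟨h1.symm, h2.symm⟩⟩
  loopless := ⟨fun x h => h.1 rfl⟩

private def dartA (l : {x : V // x ≠ c}) : (starG c).Dart :=
  ⟨(c, l.1), ⟨fun h => l.2 h.symm, Or.inl rfl⟩⟩

private def dartB (l : {x : V // x ≠ c}) : (starG c).Dart :=
  ⟨(l.1, c), ⟨l.2, Or.inr rfl⟩⟩

private def ψ (p : {x : V // x ≠ c} × Bool) : (starG c).Dart :=
  cond p.2 (dartA c p.1) (dartB c p.1)

private lemma ψA (l : {x : V // x ≠ c}) : ψ c (l, true) = dartA c l := rfl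
private lemma ψB (l : {x : V // x ≠ c}) : ψ c (l, false) = dartB c l := rfl

private lemma dartA_snd_ne (d : (starG c).Dart) (h : d.toProd.1 = c) : d.toProd.2 ≠ c :=
  fun h2 => d.adj.1 (h.trans h2.symm)

private lemma dart_snd_eq (d : (starG c).Dart) (h : ¬ d.toProd.1 = c) : d.toProd.2 = c := by
  rcases d.adj.2 with h1 | h1
  · exact absurd h1 h
  · exact h1

private def ψinv (d : (starG c).Dart) : {x : V // x ≠ c} × Bool :=
  if h : d.toProd.1 = c then (⟨d.toProd.2, dartA_snd_ne c d h⟩, true)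
  else (⟨d.toProd.1, h⟩, false)

private def starDartEquiv : ({x : V // x ≠ c} × Bool) ≃ (starG c).Dart where
  toFun := ψ c
  invFun := ψinv c
  left_inv := by
    rintro ⟨l, b⟩
    cases b
    · simp only [ψ, cond_false, ψinv, dartB]
      exact dif_neg l.2
    · simp only [ψ, cond_true, ψinv, dartA]
      simp
  right_inv := by
    intro d
    by_cases h : d.toProd.1 = c
    · simp only [ψinv, dif_pos h, ψ, cond_true, dartA]
      exact SimpleGraph.Dart.toProd_injective (Prod.ext h.symm rfl)
    · simp only [ψinv, dif_neg h, ψ, cond_false, dartB]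
      exact SimpleGraph.Dart.toProd_injective (Prod.ext rfl (dart_snd_eq c d h).symm)

variable (ρ : Equiv.Perm {x : V // x ≠ c})

private def halfPerm : Equiv.Perm ({x : V // x ≠ c} × Bool) where
  toFun p := (cond p.2 (ρ p.1) p.1, p.2)
  invFun p := (cond p.2 (ρ.symm p.1) p.1, p.2)
  left_inv := by rintro ⟨l, b⟩; cases b <;> simp
  right_inv := by rintro ⟨l, b⟩; cases b <;> simp

private def starRot : Equiv.Perm (starG c).Dart :=
  (starDartEquiv c).permCongr (halfPerm c ρ)

private lemma starRot_A (l : {x : V // x ≠ c}) :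
    starRot c ρ (ψ c (l, true)) = ψ c (ρ l, true) := by
  simp only [starRot, Equiv.permCongr_apply]
  rw [show (starDartEquiv c).symm (ψ c (l, true)) = (l, true) from
    (starDartEquiv c).symm_apply_apply (l, true)]
  rfl

private lemma starRot_B (l : {x : V // x ≠ c}) :
    starRot c ρ (ψ c (l, false)) = ψ c (l, false) := by
  simp only [starRot, Equiv.permCongr_apply]
  rw [show (starDartEquiv c).symm (ψ c (l, false)) = (l, false) from
    (starDartEquiv c).symm_apply_apply (l, false)]
  rfl

private lemma starRot_symm_B (l : {x : V // x ≠ c}) :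
    (starRot c ρ).symm (ψ c (l, false)) = ψ c (l, false) := by
  conv_lhs => rw [← starRot_B c ρ l]
  exact (starRot c ρ).symm_apply_apply _

private lemma starRot_symm_A (l : {x : V // x ≠ c}) :
    (starRot c ρ).symm (ψ c (l, true)) = ψ c (ρ.symm l, true) := by
  have := starRot_A c ρ (ρ.symm l)
  rw [ρ.apply_symm_apply] at this
  rw [← this, (starRot c ρ).symm_apply_apply]

private lemma starRot_pow_A (k : ℕ) (l : {x : V // x ≠ c}) :
    ((starRot c ρ) ^ k) (ψ c (l, true)) = ψ c ((ρ ^ k) l, true) := by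
  induction k generalizing l with
  | zero => simp
  | succ k ih =>
    rw [pow_succ, pow_succ, Equiv.Perm.mul_apply, Equiv.Perm.mul_apply, starRot_A, ih]

private lemma exists_dart_rep (d : (starG c).Dart) :
    ∃ l b, d = ψ c (l, b) :=
  ⟨((starDartEquiv c).symm d).1, ((starDartEquiv c).symm d).2,
    ((starDartEquiv c).apply_symm_apply d).symm⟩

private lemma ψ_fst_true (l : {x : V // x ≠ c}) : (ψ c (l, true)).toProd.1 = c := rfl
private lemma ψ_fst_false (l : {x : V // x ≠ c}) : (ψ c (l, false)).toProd.1 = l.1 := rfl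

private def starScheme (hρ : ∀ l l' : {x : V // x ≠ c}, ∃ k : ℕ, (ρ ^ k) l = l') :
    Scheme (starG c) where
  rot := starRot c ρ
  rot_fst := by
    intro d
    obtain ⟨l, b, rfl⟩ := exists_dart_rep c d
    cases b
    · rw [starRot_B]
    · rw [starRot_A]; rfl
  rot_single := by
    intro d e h
    obtain ⟨l, b, rfl⟩ := exists_dart_rep c d
    obtain ⟨l', b', rfl⟩ := exists_dart_rep c e
    cases b <;> cases b'
    · -- both false : equal darts
      have : l = l' := Subtype.ext (by simpa [ψ_fst_false] using h)
      rw [this]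
    · exact absurd ((ψ_fst_false c l).symm.trans (h.trans (ψ_fst_true c l'))) l.2
    · exact absurd ((ψ_fst_true c l).symm.trans (h.trans (ψ_fst_false c l'))).symm l'.2
    · obtain ⟨k, hk⟩ := hρ l l'
      exact ⟨(k : ℤ), by rw [zpow_natCast, starRot_pow_A, hk]⟩
  sgn := fun _ => false
  sgn_symm := fun _ => rfl

end Star
end CrosscapDef

namespace CrosscapDef

open SimpleGraph

section Star2

variable {V : Type*} [DecidableEq V] (c : V) (ρ : Equiv.Perm {x : V // x ≠ c})
  (hρ : ∀ l l' : {x : V // x ≠ c}, ∃ k : ℕ, (ρ ^ k) l = l')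

private lemma ψ_symm_A (l : {x : V // x ≠ c}) :
    (ψ c (l, true)).symm = ψ c (l, false) :=
  SimpleGraph.Dart.toProd_injective (by rw [SimpleGraph.Dart.symm_toProd]; rfl)

private lemma ψ_symm_B (l : {x : V // x ≠ c}) :
    (ψ c (l, false)).symm = ψ c (l, true) :=
  SimpleGraph.Dart.toProd_injective (by rw [SimpleGraph.Dart.symm_toProd]; rfl)

private lemma starFace_snd (p : (starG c).Dart × Bool) :
    (((starScheme c ρ hρ).facePerm) p).2 = p.2 := by
  rw [Scheme.facePerm_apply]
  show xor p.2 false = p.2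
  exact Bool.xor_false p.2

private lemma starFace_A (l : {x : V // x ≠ c}) (s : Bool) :
    (starScheme c ρ hρ).facePerm (ψ c (l, true), s) = (ψ c (l, false), s) := by
  rw [Scheme.facePerm_apply]
  show (cond (xor s false) _ _, xor s false) = _
  rw [Bool.xor_false]
  show (cond s (starRot c ρ (ψ c (l, true)).symm) ((starRot c ρ).symm (ψ c (l, true)).symm), s)
    = (ψ c (l, false), s)
  rw [ψ_symm_A, starRot_B, starRot_symm_B]
  cases s <;> rfl

private lemma starFace_B (l : {x : V // x ≠ c}) (s : Bool) :
    (starScheme c ρ hρ).facePerm (ψ c (l, false), s)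
      = (cond s (ψ c (ρ l, true)) (ψ c (ρ.symm l, true)), s) := by
  rw [Scheme.facePerm_apply]
  show (cond (xor s false) _ _, xor s false) = _
  rw [Bool.xor_false]
  show (cond s (starRot c ρ (ψ c (l, false)).symm) ((starRot c ρ).symm (ψ c (l, false)).symm), s)
    = _
  rw [ψ_symm_B, starRot_A, starRot_symm_A]

private lemma starFace_sq_T (l : {x : V // x ≠ c}) :
    (starScheme c ρ hρ).facePerm ((starScheme c ρ hρ).facePerm (ψ c (l, true), true))
      = (ψ c (ρ l, true), true) := by
  rw [starFace_A, starFace_B]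
  rfl

private lemma starFace_sq_F (l : {x : V // x ≠ c}) :
    (starScheme c ρ hρ).facePerm ((starScheme c ρ hρ).facePerm (ψ c (l, true), false))
      = (ψ c (ρ.symm l, true), false) := by
  rw [starFace_A, starFace_B]
  rfl

private lemma sc_T (k : ℕ) (l : {x : V // x ≠ c}) :
    ((starScheme c ρ hρ).facePerm).SameCycle (ψ c (l, true), true) (ψ c ((ρ ^ k) l, true), true) := by
  induction k with
  | zero => simp [Equiv.Perm.SameCycle.rfl]
  | succ k ih =>
    refine ih.trans ⟨(2 : ℤ), ?_⟩
    rw [show ((2:ℤ)) = ((2:ℕ) : ℤ) by norm_num, zpow_natCast, pow_two, Equiv.Perm.mul_apply,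
      starFace_sq_T, pow_succ', Equiv.Perm.mul_apply]

private lemma sc_F (k : ℕ) (l : {x : V // x ≠ c}) :
    ((starScheme c ρ hρ).facePerm).SameCycle (ψ c (l, true), false)
      (ψ c ((ρ.symm ^ k) l, true), false) := by
  induction k with
  | zero => simp [Equiv.Perm.SameCycle.rfl]
  | succ k ih =>
    refine ih.trans ⟨(2 : ℤ), ?_⟩
    rw [show ((2:ℤ)) = ((2:ℕ) : ℤ) by norm_num, zpow_natCast, pow_two, Equiv.Perm.mul_apply,
      starFace_sq_F, pow_succ', Equiv.Perm.mul_apply]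

private lemma sc_all (x y : (starG c).Dart × Bool) (h : x.2 = y.2) :
    ((starScheme c ρ hρ).facePerm).SameCycle x y := by
  obtain ⟨d, s⟩ := x
  obtain ⟨d', s'⟩ := y
  cases h
  -- reduce to true-darts
  have reduce : ∀ e : (starG c).Dart, ∃ l : {x : V // x ≠ c},
      ((starScheme c ρ hρ).facePerm).SameCycle (e, s) (ψ c (l, true), s) := by
    intro e
    obtain ⟨l, b, rfl⟩ := exists_dart_rep c e
    cases b
    · have h1 : ((starScheme c ρ hρ).facePerm).SameCycle (ψ c (l, true), s)
          (ψ c (l, false), s) := ⟨1, by rw [zpow_one, starFace_A]⟩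
      exact ⟨l, h1.symm⟩
    · exact ⟨l, Equiv.Perm.SameCycle.rfl⟩
  obtain ⟨l, hl⟩ := reduce d
  obtain ⟨l', hl'⟩ := reduce d'
  refine hl.trans (Equiv.Perm.SameCycle.trans ?_ hl'.symm)
  cases s
  · obtain ⟨k, hk⟩ := hρ l' l
    have h2 : (ρ.symm ^ k) l = l' := by
      rw [← Equiv.Perm.inv_def, inv_pow, Equiv.Perm.inv_eq_iff_eq]
      exact hk.symm
    have := sc_F c ρ hρ k l
    rwa [h2] at this
  · obtain ⟨k, hk⟩ := hρ l l'
    have := sc_T c ρ hρ k l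
    rwa [hk] at this

end Star2
end CrosscapDef

namespace CrosscapDef

open SimpleGraph

section Star3

variable {V : Type*} [DecidableEq V] (c : V) (ρ : Equiv.Perm {x : V // x ≠ c})
  (hρ : ∀ l l' : {x : V // x ≠ c}, ∃ k : ℕ, (ρ ^ k) l = l')

private lemma star_cycleCount (hne : Nonempty {x : V // x ≠ c}) :
    cycleCount ((starScheme c ρ hρ).facePerm) = 2 := by
  classical
  obtain ⟨l₀⟩ := hne
  set P := (starScheme c ρ hρ).facePerm with hP
  have hsnd : ∀ x, (P x).2 = x.2 := starFace_snd c ρ hρ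
  have hlift : ∀ x y : (starG c).Dart × Bool, P.SameCycle x y → x.2 = y.2 :=
    fun x y h => sameCycle_const P (fun p => p.2) hsnd h
  let val2 : Quotient (cycSetoid P) → Bool := Quotient.lift (fun p => p.2) hlift
  have hbij : Function.Bijective val2 := by
    constructor
    · intro q q'
      refine Quotient.inductionOn₂ q q' ?_
      intro x y h
      exact Quotient.sound (sc_all c ρ hρ x y h)
    · intro b
      exact ⟨Quotient.mk _ (ψ c (l₀, true), b), rfl⟩
  rw [cycleCount_eq_card, Nat.card_congr (Equiv.ofBijective val2 hbij)]
  simp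

private lemma star_genus [Fintype V] (hne : Nonempty {x : V // x ≠ c}) :
    (starScheme c ρ hρ).eulerGenus = 0 := by
  classical
  have hdart : Nat.card (starG c : SimpleGraph V).Dart
      = 2 * Fintype.card {x : V // x ≠ c} := by
    rw [← Nat.card_congr (starDartEquiv c), Nat.card_eq_fintype_card, Fintype.card_prod,
      Fintype.card_bool, mul_comm]
  have hface : (starScheme c ρ hρ).faceCount = 1 := by
    rw [Scheme.faceCount, star_cycleCount c ρ hρ hne]
  have hL : Fintype.card {x : V // x ≠ c} = Fintype.card V - 1 := by
    have h := Fintype.card_subtype_compl (fun x : V => x = c)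
    rw [Fintype.card_subtype_eq] at h
    exact h
  have hLpos : 0 < Fintype.card {x : V // x ≠ c} := Fintype.card_pos
  have hV : Nat.card V = Fintype.card V := Nat.card_eq_fintype_card
  rw [Scheme.eulerGenus, hface, hdart, hL]
  have h1 : 1 ≤ Fintype.card V - 1 := by omega
  have h2 : 2 * (Fintype.card V - 1) / 2 = Fintype.card V - 1 := by omega
  rw [h2, hV]
  have h3 : 2 ≤ Fintype.card V := by omega
  push_cast [Nat.cast_sub (by omega : 1 ≤ Fintype.card V)]
  ring

private lemma star_preconnected : (starG c : SimpleGraph V).Preconnected := by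
  intro u v
  by_cases huv : u = v
  · rw [huv]
  by_cases hu : u = c
  · subst hu
    exact (SimpleGraph.Adj.reachable ⟨fun h => huv h, Or.inl rfl⟩)
  by_cases hv : v = c
  · subst hv
    exact (SimpleGraph.Adj.reachable ⟨huv, Or.inr rfl⟩)
  · exact (SimpleGraph.Adj.reachable (⟨hu, Or.inr rfl⟩ : (starG c).Adj u c)).trans
      (SimpleGraph.Adj.reachable ⟨fun h => hv h.symm, Or.inl rfl⟩)

end Star3

private lemma permCongr_pow_apply {α β : Type*} (e : α ≃ β) (p : Equiv.Perm α) (k : ℕ)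
    (x : β) : ((e.permCongr p) ^ k) x = e ((p ^ k) (e.symm x)) := by
  induction k with
  | zero => simp
  | succ k ih =>
    rw [pow_succ', pow_succ', Equiv.Perm.mul_apply, Equiv.Perm.mul_apply, ih]
    rw [Equiv.permCongr_apply]
    simp

open Fin.NatCast in
private lemma finRotate_pow (m k : ℕ) (i : Fin (m + 1)) :
    ((finRotate (m + 1)) ^ k) i = i + (k : Fin (m + 1)) := by
  induction k with
  | zero => simp
  | succ k ih =>
    rw [pow_succ', Equiv.Perm.mul_apply, ih, finRotate_succ_apply]
    push_cast
    exact add_assoc i (↑k) 1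

open Fin.NatCast in
lemma embeds_bot (V : Type*) [Finite V] [Nontrivial V] :
    EmbedsWithCrosscaps (⊥ : SimpleGraph V) 0 := by
  classical
  haveI : Fintype V := Fintype.ofFinite V
  obtain ⟨c', c, hcc⟩ := exists_pair_ne V
  haveI hne : Nonempty {x : V // x ≠ c} := ⟨⟨c', hcc⟩⟩
  obtain ⟨m, hm⟩ : ∃ m, Fintype.card {x : V // x ≠ c} = m + 1 :=
    ⟨Fintype.card {x : V // x ≠ c} - 1, by have := (Fintype.card_pos (α := {x : V // x ≠ c})); omega⟩
  let q : {x : V // x ≠ c} ≃ Fin (m + 1) := Fintype.equivFinOfCardEq hm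
  let ρ : Equiv.Perm {x : V // x ≠ c} := q.symm.permCongr (finRotate (m + 1))
  have hρ : ∀ l l' : {x : V // x ≠ c}, ∃ k : ℕ, (ρ ^ k) l = l' := by
    intro l l'
    refine ⟨(q l' - q l).val, ?_⟩
    rw [show ρ = q.symm.permCongr (finRotate (m + 1)) from rfl, permCongr_pow_apply]
    simp only [Equiv.symm_symm]
    rw [finRotate_pow, Fin.cast_val_eq_self]
    have harith : q l + (q l' - q l) = q l' := by
      rw [add_comm (q l) (q l' - q l), sub_add_cancel]
    rw [harith]
    exact q.symm_apply_apply l'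
  exact ⟨starG c, bot_le, star_preconnected c, starScheme c ρ hρ,
    star_genus c ρ hρ hne, Or.inl rfl⟩

end CrosscapDef

namespace CrosscapDef

section RingFacts

variable {R : Type*} [CommRing R]

lemma isUnit_one_add_jac {j : R} (hj : j ∈ (⊥ : Ideal R).jacobson) : IsUnit (1 + j) := by
  have := Ideal.mem_jacobson_bot.mp hj 1
  rw [mul_one] at this
  rwa [add_comm]

lemma not_isUnit_jac [Nontrivial R] {j : R} (hj : j ∈ (⊥ : Ideal R).jacobson) :
    ¬ IsUnit j := by
  rintro ⟨v, rfl⟩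
  have h := Ideal.mem_jacobson_bot.mp hj (-(↑v⁻¹ : R))
  rw [show (v : R) * (-(↑v⁻¹ : R)) + 1 = 0 by rw [mul_neg, Units.mul_inv]; ring] at h
  exact zero_ne_one (isUnit_zero_iff.mp h)

lemma isUnit_unit_add_jac (u : Rˣ) {j : R} (hj : j ∈ (⊥ : Ideal R).jacobson) :
    IsUnit ((u : R) + j) := by
  have h1 : IsUnit (1 + (↑u⁻¹ : R) * j) :=
    isUnit_one_add_jac (Ideal.mul_mem_left _ _ hj)
  have h2 : (u : R) * (1 + (↑u⁻¹ : R) * j) = (u : R) + j := by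
    rw [mul_add, mul_one, ← mul_assoc, Units.mul_inv, one_mul]
  rw [← h2]
  exact (Units.isUnit u).mul h1

end RingFacts

lemma exists_twocoloring {α : Type*} (g : α → α) (hg : ∀ a, g (g a) = a)
    (hfp : ∀ a, g a ≠ a) : ∃ f : α → Bool, ∀ a, f (g a) ≠ f a := by
  classical
  have hequiv : Equivalence (fun a b : α => b = a ∨ b = g a) := by
    constructor
    · intro a; exact Or.inl rfl
    · intro a b h
      rcases h with rfl | rfl
      · exact Or.inl rfl
      · exact Or.inr (hg a).symm
    · intro a b c hab hbc
      rcases hab with rfl | rfl <;> rcases hbc with rfl | rfl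
      · exact Or.inl rfl
      · exact Or.inr rfl
      · exact Or.inr rfl
      · exact Or.inl (hg a)
  let s : Setoid α := ⟨_, hequiv⟩
  let r : α → α := fun a => (Quotient.mk s a).out
  have hrg : ∀ a, r (g a) = r a := by
    intro a
    have h : Quotient.mk s (g a) = Quotient.mk s a := Quotient.sound (Or.inr (hg a).symm)
    show (Quotient.mk s (g a)).out = (Quotient.mk s a).out
    rw [h]
  have hr : ∀ a, r a = a ∨ r a = g a := by
    intro a
    have h := Quotient.mk_out (s := s) a
    rcases h with h | h
    · exact Or.inl h.symm
    · right
      have h2 := congrArg g h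
      rw [hg] at h2
      exact h2.symm
  refine ⟨fun a => if r a = a then true else false, ?_⟩
  intro a
  show (if r (g a) = g a then true else false) ≠ (if r a = a then true else false)
  rcases hr a with h | h
  · rw [if_pos h, if_neg ?_]
    · simp
    · rw [hrg a, h]
      exact Ne.symm (hfp a)
  · rw [if_pos (by rw [hrg a, h] : r (g a) = g a), if_neg (by rw [h]; exact hfp a)]
    simp

end CrosscapDef

namespace CrosscapDef

section Main

variable {R : Type*} [CommRing R] [Finite R] (S : Set Rˣ) (hS : S⁻¹ ⊆ S)

lemma unitGamma_adj_iff (x y : R) :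
    (unitGammaGraph R S hS).Adj x y ↔ x ≠ y ∧ ∃ s ∈ S, ∃ u : Rˣ, (u : R) = x + ↑s * y := by
  constructor
  · rintro ⟨h1, s, hs, u, _, h2⟩
    exact ⟨h1, s, hs, u, h2⟩
  · rintro ⟨h1, s, hs, u, h2⟩
    exact ⟨h1, s, hs, u, Subgroup.mem_top u, h2⟩

lemma part1 (s₀ : Rˣ) (hs₀ : s₀ ∈ S) {H : SimpleGraph R}
    (hGH : unitGammaGraph R S hS ≤ H) (σ : Scheme H) (hg : σ.eulerGenus = 1) :
    Nat.card Rˣ ≤ 6 := by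
  classical
  by_contra hM
  push_neg at hM
  haveI : Fintype R := Fintype.ofFinite R
  haveI : Fintype Rˣ := Fintype.ofFinite Rˣ
  haveI : Finite H.Dart := dart_finite H
  set M := Nat.card Rˣ with hMdef
  set n := Nat.card R with hndef
  set y : R → Rˣ → R := fun x u => (↑s₀⁻¹ : R) * (↑u - x) with hy
  have hcalc : ∀ (x : R) (u : Rˣ), x + ↑s₀ * y x u = ↑u := by
    intro x u
    rw [hy]
    rw [← mul_assoc, Units.mul_inv, one_mul]
    ring
  have hyinj : ∀ x : R, Function.Injective (y x) := by
    intro x u u' h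
    apply Units.ext
    rw [← hcalc x u, ← hcalc x u', h]
  have hGadj : ∀ (x : R) (u : Rˣ), ¬ (y x u = x) → (unitGammaGraph R S hS).Adj x (y x u) := by
    intro x u hne
    exact (unitGamma_adj_iff S hS x (y x u)).mpr
      ⟨fun h => hne h.symm, s₀, hs₀, u, (hcalc x u).symm⟩
  have hfib : ∀ x : R, Fintype.card Rˣ - 1 ≤ Fintype.card {u : Rˣ // ¬ (y x u = x)} := by
    intro x
    rw [Fintype.card_subtype_compl]
    have h1 : Fintype.card {u : Rˣ // y x u = x} ≤ 1 := by
      rw [Fintype.card_le_one_iff]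
      rintro ⟨u, hu⟩ ⟨u', hu'⟩
      exact Subtype.ext (hyinj x (hu.trans hu'.symm))
    omega
  have hMcard : Fintype.card Rˣ = M := (Nat.card_eq_fintype_card).symm
  have hdegH : ∀ v : R, ∃ a b : R, a ≠ b ∧ H.Adj v a ∧ H.Adj v b := by
    intro v
    have h2 : 1 < Fintype.card {u : Rˣ // ¬ (y v u = v)} := by
      have := hfib v
      omega
    rw [Fintype.one_lt_card_iff] at h2
    obtain ⟨⟨u, hu⟩, ⟨u', hu'⟩, huu⟩ := h2
    refine ⟨y v u, y v u', ?_, hGH (hGadj v u hu), hGH (hGadj v u' hu')⟩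
    intro heq
    exact huu (Subtype.ext (hyinj v heq))
  have hupper := genus_bound_general σ hdegH hg
  have hlow : Nat.card {q : R × Rˣ // ¬ (y q.1 q.2 = q.1)} ≤ Nat.card H.Dart := by
    refine Nat.card_le_card_of_injective
      (fun p => (⟨(p.1.1, y p.1.1 p.1.2), hGH (hGadj p.1.1 p.1.2 p.2)⟩ : H.Dart)) ?_
    rintro ⟨⟨x, u⟩, hp⟩ ⟨⟨x', u'⟩, hp'⟩ h
    have h1 : x = x' := congrArg (fun d : H.Dart => d.toProd.1) h
    subst h1
    have h2 : y x u = y x u' := congrArg (fun d : H.Dart => d.toProd.2) h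
    exact Subtype.ext (Prod.ext rfl (hyinj x h2))
  have hcount : n * (M - 1) ≤ Nat.card {q : R × Rˣ // ¬ (y q.1 q.2 = q.1)} := by
    rw [Nat.card_eq_fintype_card]
    have e := Equiv.subtypeProdEquivSigmaSubtype (fun (a : R) (b : Rˣ) => ¬ (y a b = a))
    rw [Fintype.card_congr e, Fintype.card_sigma]
    have hn' : n = Fintype.card R := Nat.card_eq_fintype_card
    calc n * (M - 1) = ∑ _x : R, (M - 1) := by
          rw [Finset.sum_const, Finset.card_univ, smul_eq_mul, ← hn', mul_comm]
      _ ≤ ∑ x : R, Fintype.card {b : Rˣ // ¬ (y x b = x)} := by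
          refine Finset.sum_le_sum fun x _ => ?_
          have := hfib x
          omega
  have h6n : n * 6 ≤ n * (M - 1) := Nat.mul_le_mul_left n (by omega)
  have hn1 : 0 < n := Nat.card_pos
  omega

end Main
end CrosscapDef

namespace CrosscapDef

section Part2

variable (R : Type*) [CommRing R]

private def oneAddJ : Subgroup Rˣ where
  carrier := {u : Rˣ | (↑u : R) - 1 ∈ (⊥ : Ideal R).jacobson}
  one_mem' := by simp
  mul_mem' := by
    intro u v hu hv
    have e : ((↑(u * v) : R)) - 1
        = ((↑u : R) - 1) * ((↑v : R) - 1) + ((↑u : R) - 1) + ((↑v : R) - 1) := by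
      rw [Units.val_mul]; ring
    show ((↑(u * v) : R)) - 1 ∈ (⊥ : Ideal R).jacobson
    rw [e]
    exact Ideal.add_mem _ (Ideal.add_mem _ (Ideal.mul_mem_right _ _ hu) hu) hv
  inv_mem' := by
    intro u hu
    show ((↑u⁻¹ : R)) - 1 ∈ (⊥ : Ideal R).jacobson
    have h1 : (↑u⁻¹ : R) * ↑u = 1 := Units.inv_mul u
    have e : ((↑u⁻¹ : R)) - 1 = -(↑u⁻¹ : R) * ((↑u : R) - 1) := by
      linear_combination h1
    rw [e]
    exact Ideal.mul_mem_left _ _ hu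

private lemma card_oneAddJ [Finite R] :
    Nat.card ((⊥ : Ideal R).jacobson) = Nat.card (oneAddJ R) := by
  refine Nat.card_congr ⟨fun j => ⟨(isUnit_one_add_jac j.2).unit, ?_⟩,
    fun u => ⟨(↑u.1 : R) - 1, u.2⟩, ?_, ?_⟩
  · show ((isUnit_one_add_jac j.2).unit : R) - 1 ∈ (⊥ : Ideal R).jacobson
    rw [IsUnit.unit_spec]
    simpa using j.2
  · intro j
    apply Subtype.ext
    show ((isUnit_one_add_jac j.2).unit : R) - 1 = (j : R)
    rw [IsUnit.unit_spec]
    ring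
  · intro u
    apply Subtype.ext
    apply Units.ext
    simp only [IsUnit.unit_spec]
    ring

end Part2

section Main2

variable {R : Type*} [CommRing R] [Finite R] (S : Set Rˣ) (hS : S⁻¹ ⊆ S)

lemma part2 (s₀ : Rˣ) (hs₀ : s₀ ∈ S) {H : SimpleGraph R}
    (hGH : unitGammaGraph R S hS ≤ H) (σ : Scheme H) (hg : σ.eulerGenus = 1)
    (hM6 : Nat.card Rˣ ≤ 6) : Nat.card ((⊥ : Ideal R).jacobson) ≤ 3 := by
  classical
  haveI : Fintype R := Fintype.ofFinite R
  by_contra hJ4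
  push_neg at hJ4
  have hJR : Nat.card ((⊥ : Ideal R).jacobson) ≤ Nat.card R :=
    Nat.card_le_card_of_injective _ Subtype.val_injective
  haveI : Nontrivial R := Finite.one_lt_card_iff_nontrivial.mp (by omega)
  have hPJ : Nat.card ((⊥ : Ideal R).jacobson) = Nat.card (oneAddJ R) := card_oneAddJ R
  have hdvd : Nat.card (oneAddJ R) ∣ Nat.card Rˣ := Subgroup.card_subgroup_dvd_card _
  have hMpos : 0 < Nat.card Rˣ := Nat.card_pos
  have hMeq : Nat.card (oneAddJ R) = Nat.card Rˣ := by
    obtain ⟨k, hk⟩ := hdvd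
    have h4 : 4 ≤ Nat.card (oneAddJ R) := by omega
    rcases k with _ | _ | k
    · omega
    · omega
    · have h2 : Nat.card (oneAddJ R) * 2 ≤ Nat.card Rˣ := by
        rw [hk]
        exact Nat.mul_le_mul_left _ (by omega)
      omega
  have hPtop : oneAddJ R = ⊤ := Subgroup.eq_top_of_card_eq _ hMeq
  have hPmem : ∀ u : Rˣ, (↑u : R) - 1 ∈ (⊥ : Ideal R).jacobson := by
    intro u
    have hu : u ∈ oneAddJ R := hPtop ▸ Subgroup.mem_top u
    exact hu
  have h2J : (2 : R) ∈ (⊥ : Ideal R).jacobson := by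
    have h := hPmem (-1)
    rw [Units.val_neg, Units.val_one] at h
    have h' : -(2 : R) ∈ (⊥ : Ideal R).jacobson := by
      convert h using 1
      ring
    simpa using (neg_mem_iff.mp h')
  have hs₀J : (↑s₀ : R) - 1 ∈ (⊥ : Ideal R).jacobson := hPmem s₀
  -- adjacency: x ~ u - x for every unit u
  have hGadj : ∀ (x : R) (u : Rˣ), (unitGammaGraph R S hS).Adj x (↑u - x) := by
    intro x u
    have hiu : IsUnit (x + ↑s₀ * ((↑u : R) - x)) := by
      have key : x + ↑s₀ * ((↑u : R) - x) = ↑u + ((↑s₀ : R) - 1) * ((↑u : R) - x) := by ring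
      rw [key]
      exact isUnit_unit_add_jac u (Ideal.mul_mem_right _ _ hs₀J)
    refine (unitGamma_adj_iff S hS _ _).mpr ⟨?_, s₀, hs₀, hiu.unit, hiu.unit_spec⟩
    intro h
    have h2x : (↑u : R) = 2 * x := by linear_combination -h
    have h2xJ : 2 * x ∈ (⊥ : Ideal R).jacobson :=
      Ideal.mul_mem_right _ _ h2J
    rw [← h2x] at h2xJ
    exact not_isUnit_jac h2xJ u.isUnit
  haveI hUnt : Nontrivial Rˣ := Finite.one_lt_card_iff_nontrivial.mp (by omega)
  have hdegH : ∀ v : R, ∃ a b : R, a ≠ b ∧ H.Adj v a ∧ H.Adj v b := by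
    intro v
    obtain ⟨u, u', huu⟩ := exists_pair_ne Rˣ
    refine ⟨↑u - v, ↑u' - v, ?_, hGH (hGadj v u), hGH (hGadj v u')⟩
    intro h
    exact huu (Units.ext (by linear_combination h))
  -- coloring
  set π := Ideal.Quotient.mk ((⊥ : Ideal R).jacobson) with hπ
  have h2A : π 2 = 0 := Ideal.Quotient.eq_zero_iff_mem.mpr h2J
  have h11 : (1 : R ⧸ (⊥ : Ideal R).jacobson) + 1 = 0 := by
    rw [show (1 : R ⧸ (⊥ : Ideal R).jacobson) = π 1 from (map_one π).symm, ← map_add]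
    rw [show (1 : R) + 1 = 2 from by norm_num]
    exact h2A
  set g : R ⧸ (⊥ : Ideal R).jacobson → R ⧸ (⊥ : Ideal R).jacobson := fun a => 1 + a with hgdef
  have hginv : ∀ a, g (g a) = a := by
    intro a
    show 1 + (1 + a) = a
    rw [← add_assoc, h11, zero_add]
  have hgfp : ∀ a, g a ≠ a := by
    intro a hfix
    have hfix' : (1 : R ⧸ (⊥ : Ideal R).jacobson) + a = a := hfix
    have h10 : (1 : R ⧸ (⊥ : Ideal R).jacobson) = 0 := by
      have h := congrArg (fun t => t - a) hfix'
      simpa using h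
    have h1J : (1 : R) ∈ (⊥ : Ideal R).jacobson := by
      rw [← Ideal.Quotient.eq_zero_iff_mem]
      rw [show (Ideal.Quotient.mk ((⊥ : Ideal R).jacobson)) 1 = (1 : R ⧸ (⊥ : Ideal R).jacobson) from map_one _]
      exact h10
    exact not_isUnit_jac h1J isUnit_one
  obtain ⟨f, hf⟩ := exists_twocoloring g hginv hgfp
  have hcol : ∀ x y : R, (unitGammaGraph R S hS).Adj x y → f (π y) = ! f (π x) := by
    intro x y hxy
    obtain ⟨hne, s, hsS, u, hu⟩ := (unitGamma_adj_iff S hS x y).mp hxy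
    have hxyJ : x + y - 1 ∈ (⊥ : Ideal R).jacobson := by
      have e : x + y - 1 = ((↑u : R) - 1) - ((↑s : R) - 1) * y := by linear_combination -hu
      rw [e]
      exact Ideal.sub_mem _ (hPmem u) (Ideal.mul_mem_right _ _ (hPmem s))
    have e1 : π x + π y - 1 = 0 := by
      rw [show (1 : R ⧸ (⊥ : Ideal R).jacobson) = π 1 from (map_one π).symm, ← map_add, ← map_sub]
      exact Ideal.Quotient.eq_zero_iff_mem.mpr hxyJ
    have e2 : π x + π x = 0 := by
      rw [← map_add, show x + x = 2 * x from by ring]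
      exact Ideal.Quotient.eq_zero_iff_mem.mpr (Ideal.mul_mem_right _ _ h2J)
    have hgy : π y = g (π x) := by
      show π y = 1 + π x
      linear_combination e1 - e2
    rw [hgy]
    exact Bool.eq_not_iff.mpr (hf (π x))
  have hbound := genus_bound_bipartite hGH σ hdegH (fun x => f (π x)) hcol hg
  haveI : Finite H.Dart := dart_finite H
  have hlow : Nat.card (R × Rˣ) ≤
      Nat.card {d : H.Dart // (unitGammaGraph R S hS).Adj d.toProd.1 d.toProd.2} := by
    refine Nat.card_le_card_of_injective
      (fun p => ⟨⟨(p.1, ↑p.2 - p.1), hGH (hGadj p.1 p.2)⟩, hGadj p.1 p.2⟩) ?_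
    rintro ⟨x, u⟩ ⟨x', u'⟩ h
    have h1 : x = x' := congrArg (fun d : {d : H.Dart // _} => d.1.toProd.1) h
    subst h1
    have h2 : (↑u : R) - x = ↑u' - x :=
      congrArg (fun d : {d : H.Dart // _} => d.1.toProd.2) h
    exact Prod.ext rfl (Units.ext (by linear_combination h2))
  have hcards : Nat.card (R × Rˣ) = Nat.card R * Nat.card Rˣ := Nat.card_prod R Rˣ
  have hn1 : 0 < Nat.card R := Nat.card_pos
  have hMJ : 4 ≤ Nat.card Rˣ := by omega
  have h4n : Nat.card R * 4 ≤ Nat.card R * Nat.card Rˣ := Nat.mul_le_mul_left _ hMJ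
  omega

end Main2
end CrosscapDef

open CrosscapDef in
/-- If `R` is a finite commutative ring with `γ̃(Γ(R, S)) = 1`, then `|U(R)| ≤ 6` and
`|J(R)| ≤ 3`. -/
theorem card_units_le_of_crosscap_eq_one {R : Type*} [CommRing R] [Finite R] (S : Set Rˣ)
    (hS : S⁻¹ ⊆ S) (h : crosscap (unitGammaGraph R S hS) = 1) :
    Nat.card Rˣ ≤ 6 ∧ Nat.card ((⊥ : Ideal R).jacobson) ≤ 3 := by
  classical
  rw [crosscap] at h
  have hne : {k : ℕ | EmbedsWithCrosscaps (unitGammaGraph R S hS) k}.Nonempty := by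
    by_contra hcon
    rw [Set.not_nonempty_iff_eq_empty] at hcon
    rw [hcon, Nat.sInf_empty] at h
    exact one_ne_zero h.symm
  have h1mem : EmbedsWithCrosscaps (unitGammaGraph R S hS) 1 := by
    have hmem := Nat.sInf_mem hne
    rwa [h] at hmem
  have h0not : ¬ EmbedsWithCrosscaps (unitGammaGraph R S hS) 0 := by
    intro h0
    have h0' : sInf {k : ℕ | EmbedsWithCrosscaps (unitGammaGraph R S hS) k} = 0 :=
      Nat.sInf_eq_zero.mpr (Or.inl h0)
    omega
  by_cases hSne : S.Nonempty
  · obtain ⟨s₀, hs₀⟩ := hSne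
    obtain ⟨H, hGH, _, σ, hg, _⟩ := h1mem
    have hp1 := part1 S hS s₀ hs₀ hGH σ hg
    exact ⟨hp1, part2 S hS s₀ hs₀ hGH σ hg hp1⟩
  · have hGbot : unitGammaGraph R S hS = ⊥ := by
      ext x y
      simp only [SimpleGraph.bot_adj, iff_false]
      intro hadj
      obtain ⟨h1, s, hs, _⟩ := (unitGamma_adj_iff S hS x y).mp hadj
      exact hSne ⟨s, hs⟩
    rcases subsingleton_or_nontrivial R with hsub | hnt
    · haveI : Subsingleton Rˣ := ⟨fun a b => Units.ext (Subsingleton.elim _ _)⟩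
      constructor
      · by_contra hc
        push_neg at hc
        haveI : Nontrivial Rˣ := Finite.one_lt_card_iff_nontrivial.mp (by omega)
        obtain ⟨a, b, hab⟩ := exists_pair_ne Rˣ
        exact hab (Subsingleton.elim a b)
      · by_contra hc
        push_neg at hc
        haveI : Nontrivial ((⊥ : Ideal R).jacobson) :=
          Finite.one_lt_card_iff_nontrivial.mp (by omega)
        obtain ⟨a, b, hab⟩ := exists_pair_ne ((⊥ : Ideal R).jacobson)
        exact hab (Subsingleton.elim a b)
    · refine absurd ?_ h0not
      rw [hGbot]
      exact embeds_bot R
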